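/- arXiv:1507.05899 — 2 statements merged into one kernel-verified Lean document; each statement's English description precedes it below -/
import Mathlib

section
/- Let M, M̂ : A → ℝ be functions on a finite set A, with M̂(α) ≥ 0 for all α, and let p ≥ 0. Define the thresholded M̃ by M̃(α) = M̂(α) if M̂(α) ≥ τ and M̃(α) = 0 otherwise, where τ = p |A₊|^{-1} Σ_{α∈A₊} M̂(α) and A₊ = {α : M̂(α) > 0} is assumed nonempty. Then ‖M̃ − M‖_∞ ≤ (p+1) ‖M̂ − M‖_∞ + p |A₊|^{-1} Σ_{α∈A₊} M(α). -/
theorem stmt13 {A : Type*} [Fintype A] [Nonempty A] (M Mh : A → ℝ)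
    (hM : ∀ a, 0 ≤ M a) (hMh : ∀ a, 0 ≤ Mh a) (p : ℝ) (hp : 0 ≤ p)
    (Ap : Finset A) (hAp : ∀ a, a ∈ Ap ↔ 0 < Mh a) (hne : Ap.Nonempty)
    (τ : ℝ) (hτ : τ = p * (Ap.card : ℝ)⁻¹ * ∑ a ∈ Ap, Mh a)
    (Mt : A → ℝ) (hMt : ∀ a, Mt a = if τ ≤ Mh a then Mh a else 0) :
    Finset.univ.sup' Finset.univ_nonempty (fun a => |Mt a - M a|) ≤
      (p + 1) * Finset.univ.sup' Finset.univ_nonempty (fun a => |Mh a - M a|) +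
        p * (Ap.card : ℝ)⁻¹ * ∑ a ∈ Ap, M a := by
  set S := Finset.univ.sup' Finset.univ_nonempty (fun a => |Mh a - M a|) with hSdef
  have hS : ∀ a, |Mh a - M a| ≤ S := fun a =>
    Finset.le_sup' (fun a => |Mh a - M a|) (Finset.mem_univ a)
  obtain ⟨a0⟩ := ‹Nonempty A›
  have hSnn : 0 ≤ S := le_trans (abs_nonneg _) (hS a0)
  have hcard : (0 : ℝ) < (Ap.card : ℝ) := by
    exact_mod_cast Finset.card_pos.mpr hne
  have hτnn : 0 ≤ τ := by
    rw [hτ]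
    exact mul_nonneg (mul_nonneg hp (inv_nonneg.mpr hcard.le))
      (Finset.sum_nonneg fun a _ => hMh a)
  have hτle : τ ≤ p * S + p * (Ap.card : ℝ)⁻¹ * ∑ a ∈ Ap, M a := by
    have hsum : ∑ a ∈ Ap, Mh a ≤ (∑ a ∈ Ap, M a) + (Ap.card : ℝ) * S := by
      have : ∑ a ∈ Ap, Mh a ≤ ∑ a ∈ Ap, (M a + S) := by
        apply Finset.sum_le_sum
        intro a _
        have := hS a
        have : Mh a - M a ≤ S := (abs_le.mp this).2
        linarith
      simpa [Finset.sum_add_distrib, mul_comm] using this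
    rw [hτ]
    have h1 : p * (Ap.card : ℝ)⁻¹ * ∑ a ∈ Ap, Mh a ≤
        p * (Ap.card : ℝ)⁻¹ * ((∑ a ∈ Ap, M a) + (Ap.card : ℝ) * S) :=
      mul_le_mul_of_nonneg_left hsum (mul_nonneg hp (inv_nonneg.mpr hcard.le))
    have h2 : p * (Ap.card : ℝ)⁻¹ * ((Ap.card : ℝ) * S) = p * S := by
      field_simp
    nlinarith [h1, h2]
  apply Finset.sup'_le
  intro a _
  have key : |Mt a - M a| ≤ S + τ := by
    rw [hMt a]
    by_cases h : τ ≤ Mh a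
    · simp only [h, if_true]
      linarith [hS a]
    · simp only [h, if_false]
      push_neg at h
      rw [zero_sub, abs_neg, abs_of_nonneg (hM a)]
      have := (abs_le.mp (hS a)).1
      linarith
  have : (p + 1) * S = p * S + S := by ring
  linarith [key, hτle]
end

section
/- Let Φ be a measure on S = {x ∈ [0,1]^d : ‖x‖_∞ = 1} which decomposes as Φ = Σ_{β, i₀∈β} Φ_{β,i₀} where each Φ_{β,i₀} is supported on the edge Ω_{β,i₀} and is absolutely continuous with density bounded by M_β with respect to the Lebesgue measure on that edge, and suppose Σ_{|β|≥2} M_β ≤ M. Then for every nonempty α ⊆ {1,…,d} and 0 < ε, ε' < 1/2, |Φ(Ω_α^{ε,ε'}) − Φ(Ω_α)| ≤ M |α|² ε + M d ε'. -/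
open MeasureTheory Set

/-- Sup-norm of a vector in `ℝ^d`. -/
noncomputable def supNorm {d : ℕ} [NeZero d] (v : Fin d → ℝ) : ℝ :=
  Finset.univ.sup' Finset.univ_nonempty v

/-- Positive orthant of the unit sphere for the sup-norm. -/
def sphereS {d : ℕ} [NeZero d] : Set (Fin d → ℝ) :=
  {x | (∀ j, 0 ≤ x j ∧ x j ≤ 1) ∧ supNorm x = 1}

/-- Sub-sphere `Ω_α`. -/
def omegaSet {d : ℕ} [NeZero d] (α : Finset (Fin d)) : Set (Fin d → ℝ) :=
  {x | x ∈ sphereS ∧ (∀ i ∈ α, 0 < x i) ∧ (∀ i ∉ α, x i = 0)}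

/-- Thickened sub-sphere `Ω_α^{ε,ε'}`. -/
def omegaThick {d : ℕ} [NeZero d] (α : Finset (Fin d)) (ε ε' : ℝ) : Set (Fin d → ℝ) :=
  {x | x ∈ sphereS ∧ (∀ i ∈ α, ε < x i) ∧ (∀ i ∉ α, x i ≤ ε')}

/-- Edge `Ω_{β,i₀}` of the sphere. -/
def edgeSet {d : ℕ} [NeZero d] (β : Finset (Fin d)) (i₀ : Fin d) : Set (Fin d → ℝ) :=
  {x | x ∈ sphereS ∧ x i₀ = 1 ∧ (∀ i ∈ β, i ≠ i₀ → 0 < x i ∧ x i < 1) ∧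
    (∀ i ∉ β, x i = 0)}

/-- Parametrization of the edge `Ω_{β,i₀}` by the free coordinates `β \ {i₀}`. -/
noncomputable def edgeEmb {d : ℕ} (β : Finset (Fin d)) (i₀ : Fin d)
    (y : {j : Fin d // j ∈ β.erase i₀} → ℝ) : Fin d → ℝ :=
  fun j => if j = i₀ then 1 else if h : j ∈ β.erase i₀ then y ⟨j, h⟩ else 0

/-- Lebesgue measure on the edge `Ω_{β,i₀}` (pushforward of the product Lebesgue
measure on the free coordinates `β \ {i₀}`). -/
noncomputable def edgeLebesgue {d : ℕ} (β : Finset (Fin d)) (i₀ : Fin d) :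
    Measure (Fin d → ℝ) :=
  Measure.map (edgeEmb β i₀) volume

section Aux

variable {d : ℕ}

lemma edgeEmb_measurable (β : Finset (Fin d)) (i₀ : Fin d) :
    Measurable (edgeEmb β i₀) := by
  apply measurable_pi_lambda
  intro j
  by_cases h1 : j = i₀
  · simp only [edgeEmb, if_pos h1]; exact measurable_const
  · by_cases h2 : j ∈ β.erase i₀
    · simpa only [edgeEmb, if_neg h1, dif_pos h2] using
        measurable_pi_apply (⟨j, h2⟩ : {j // j ∈ β.erase i₀})
    · simp only [edgeEmb, if_neg h1, dif_neg h2]; exact measurable_const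

lemma edgeEmb_apply_mem {β : Finset (Fin d)} {i₀ : Fin d} (y : {j : Fin d // j ∈ β.erase i₀} → ℝ)
    {j : Fin d} (hj : j ∈ β.erase i₀) : edgeEmb β i₀ y j = y ⟨j, hj⟩ := by
  have hne : j ≠ i₀ := (Finset.mem_erase.mp hj).1
  simp [edgeEmb, hne, hj]

/-- The box on the edge with one coordinate restricted to `[0,c]`. -/
def Dset (s : Finset (Fin d)) (i₀ k : Fin d) (c : ℝ) : Set (Fin d → ℝ) :=
  {x | ∀ j ∈ s.erase i₀, x j ∈ Set.Icc (0:ℝ) (if j = k then c else 1)}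

lemma Dset_measurable (s : Finset (Fin d)) (i₀ k : Fin d) (c : ℝ) :
    MeasurableSet (Dset s i₀ k c) := by
  have : Dset s i₀ k c =
      ⋂ j ∈ s.erase i₀, (fun x : Fin d → ℝ => x j) ⁻¹' Set.Icc (0:ℝ) (if j = k then c else 1) := by
    ext x; simp [Dset]
  rw [this]
  exact MeasurableSet.biInter (Set.to_countable _)
    (fun j _ => measurableSet_Icc.preimage (measurable_pi_apply j))

lemma Dset_vol (s : Finset (Fin d)) (i₀ : Fin d) {k : Fin d} (hk : k ∈ s.erase i₀) (c : ℝ) :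
    edgeLebesgue s i₀ (Dset s i₀ k c) ≤ ENNReal.ofReal c := by
  rw [edgeLebesgue, Measure.map_apply (edgeEmb_measurable s i₀) (Dset_measurable s i₀ k c)]
  have hpre : edgeEmb s i₀ ⁻¹' Dset s i₀ k c =
      Set.univ.pi (fun j : {j // j ∈ s.erase i₀} =>
        Set.Icc (0:ℝ) (if (j : Fin d) = k then c else 1)) := by
    ext y
    simp only [Set.mem_preimage, Dset, Set.mem_setOf_eq, Set.mem_pi, Set.mem_univ,
      forall_true_left]
    constructor
    · intro h j
      have := h j.1 j.2
      rwa [edgeEmb_apply_mem y j.2] at this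
    · intro h j hj
      rw [edgeEmb_apply_mem y hj]
      exact h ⟨j, hj⟩
  rw [hpre, volume_pi_pi]
  have hf : ∀ j : {j // j ∈ s.erase i₀},
      volume (Set.Icc (0:ℝ) (if (j : Fin d) = k then c else 1)) =
        if (j : Fin d) = k then ENNReal.ofReal c else 1 := by
    intro j; split_ifs <;> simp [Real.volume_Icc]
  simp_rw [hf]
  rw [Finset.prod_eq_single (⟨k, hk⟩ : {j // j ∈ s.erase i₀})
    (fun b _ hb => by
      rw [if_neg]; intro hbk; exact hb (Subtype.ext hbk))
    (fun h => absurd (Finset.mem_univ _) h)]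
  simp

lemma measure_eq_inter_of_compl_null {X : Type*} [MeasurableSpace X] {μ : Measure X}
    {E : Set X} (hE : μ Eᶜ = 0) (A : Set X) : μ A = μ (A ∩ E) := by
  apply le_antisymm
  · have hsub : A ⊆ (A ∩ E) ∪ Eᶜ := by
      intro x hx
      by_cases h : x ∈ E
      · exact Or.inl ⟨hx, h⟩
      · exact Or.inr h
    calc μ A ≤ μ ((A ∩ E) ∪ Eᶜ) := measure_mono hsub
      _ ≤ μ (A ∩ E) + μ Eᶜ := measure_union_le _ _
      _ = μ (A ∩ E) := by rw [hE, add_zero]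
  · exact measure_mono Set.inter_subset_left

end Aux

theorem stmt16 {d : ℕ} [NeZero d] (Φ : Measure (Fin d → ℝ))
    (Φe : Finset (Fin d) → Fin d → Measure (Fin d → ℝ))
    (Mb : Finset (Fin d) → ℝ) (M : ℝ) (hMb : ∀ β, 0 ≤ Mb β)
    (hdecomp : Φ = ∑ β : Finset (Fin d), ∑ i₀ ∈ β, Φe β i₀)
    (hsupp : ∀ β : Finset (Fin d), ∀ i₀ ∈ β, Φe β i₀ (edgeSet β i₀)ᶜ = 0)
    (hdens : ∀ β : Finset (Fin d), ∀ i₀ ∈ β,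
      Φe β i₀ ≤ ENNReal.ofReal (Mb β) • edgeLebesgue β i₀)
    (hM : ∑ β ∈ Finset.univ.filter (fun β : Finset (Fin d) => 2 ≤ β.card), Mb β ≤ M)
    (α : Finset (Fin d)) (hα : α.Nonempty) (hMα : Mb α ≤ M)
    (ε ε' : ℝ) (hε : 0 < ε) (hε2 : ε < 1 / 2) (hε' : 0 < ε') (hε'2 : ε' < 1 / 2) :
    Φ (omegaThick α ε ε') ≤
        Φ (omegaSet α) + ENNReal.ofReal (M * (α.card : ℝ) ^ 2 * ε + M * d * ε') ∧
    Φ (omegaSet α) ≤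
        Φ (omegaThick α ε ε') + ENNReal.ofReal (M * (α.card : ℝ) ^ 2 * ε + M * d * ε') := by
  classical
  have hM0 : 0 ≤ M := le_trans (Finset.sum_nonneg fun β _ => hMb β) hM
  have hcard1 : 1 ≤ α.card := Finset.card_pos.mpr hα
  set T := omegaThick α ε ε' with hTdef
  set O := omegaSet α with hOdef
  have hedgeO : ∀ i₀ ∈ α, edgeSet α i₀ ⊆ O := by
    intro i₀ hi₀ x hx
    refine ⟨hx.1, fun i hi => ?_, hx.2.2.2⟩
    by_cases h : i = i₀
    · rw [h, hx.2.1]; norm_num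
    · exact (hx.2.2.1 i hi h).1
  -- per-edge bound in the first direction
  have key1 : ∀ β : Finset (Fin d), ∀ i₀ ∈ β,
      Φe β i₀ T ≤ Φe β i₀ O +
        ENNReal.ofReal (if α ⊆ β ∧ β ≠ α ∧ i₀ ∈ α then Mb β * ε' else 0) := by
    intro β i₀ hi₀
    rw [measure_eq_inter_of_compl_null (hsupp β i₀ hi₀) T]
    by_cases hβ : β = α
    · subst hβ
      rw [if_neg (by simp), ENNReal.ofReal_zero, add_zero]
      exact measure_mono fun x hx => hedgeO i₀ hi₀ hx.2
    · by_cases hsub : α ⊆ β ∧ i₀ ∈ α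
      · obtain ⟨hαβ, hi₀α⟩ := hsub
        obtain ⟨k, hkβ, hkα⟩ :=
          Finset.exists_of_ssubset (Finset.ssubset_iff_subset_ne.mpr ⟨hαβ, Ne.symm hβ⟩)
        have hk_erase : k ∈ β.erase i₀ :=
          Finset.mem_erase.mpr ⟨fun h => hkα (h ▸ hi₀α), hkβ⟩
        have hsubset : T ∩ edgeSet β i₀ ⊆ Dset β i₀ k ε' := by
          intro x hx j hj
          have hbox := hx.1.1.1 j
          refine ⟨hbox.1, ?_⟩
          split_ifs with hjk
          · rw [hjk]; exact hx.1.2.2 k hkα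
          · exact hbox.2
        rw [if_pos ⟨hαβ, hβ, hi₀α⟩]
        calc Φe β i₀ (T ∩ edgeSet β i₀) ≤ Φe β i₀ (Dset β i₀ k ε') := measure_mono hsubset
          _ ≤ (ENNReal.ofReal (Mb β) • edgeLebesgue β i₀) (Dset β i₀ k ε') :=
              Measure.le_iff'.mp (hdens β i₀ hi₀) _
          _ = ENNReal.ofReal (Mb β) * edgeLebesgue β i₀ (Dset β i₀ k ε') := rfl
          _ ≤ ENNReal.ofReal (Mb β) * ENNReal.ofReal ε' :=
              mul_le_mul_right (Dset_vol β i₀ hk_erase ε') _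
          _ = ENNReal.ofReal (Mb β * ε') := (ENNReal.ofReal_mul (hMb β)).symm
          _ ≤ Φe β i₀ O + ENNReal.ofReal (Mb β * ε') := self_le_add_left _ _
      · rw [if_neg (fun h => hsub ⟨h.1, h.2.2⟩), ENNReal.ofReal_zero, add_zero]
        have hempty : T ∩ edgeSet β i₀ = ∅ := by
          ext x
          simp only [Set.mem_inter_iff, Set.mem_empty_iff_false, iff_false]
          rintro ⟨hxT, hxE⟩
          rcases not_and_or.mp hsub with h | h
          · obtain ⟨i, hiα, hiβ⟩ := Finset.not_subset.mp h
            have h1 : x i = 0 := hxE.2.2.2 i hiβ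
            have h2 : ε < x i := hxT.2.1 i hiα
            linarith
          · have h1 : x i₀ = 1 := hxE.2.1
            have h2 : x i₀ ≤ ε' := hxT.2.2 i₀ h
            linarith
        rw [hempty, measure_empty]
        exact zero_le
  -- per-edge bound in the second direction
  have key2 : ∀ β : Finset (Fin d), ∀ i₀ ∈ β,
      Φe β i₀ O ≤ Φe β i₀ T +
        ENNReal.ofReal (if β = α then Mb α * ((α.card : ℝ) - 1) * ε else 0) := by
    intro β i₀ hi₀
    rw [measure_eq_inter_of_compl_null (hsupp β i₀ hi₀) O]
    by_cases hβ : β = α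
    · subst hβ
      rw [if_pos rfl]
      have hcover : O ∩ edgeSet β i₀ ⊆ T ∪ ⋃ i ∈ β.erase i₀, Dset β i₀ i ε := by
        intro x hx
        by_cases hall : ∀ i ∈ β, ε < x i
        · exact Or.inl ⟨hx.1.1, hall, fun i hi => by rw [hx.1.2.2 i hi]; exact le_of_lt hε'⟩
        · right
          push_neg at hall
          obtain ⟨i, hiβ, hile⟩ := hall
          have hne : i ≠ i₀ := by
            intro h
            have h1 : x i₀ = 1 := hx.2.2.1
            rw [h, h1] at hile
            linarith
          refine Set.mem_biUnion (Finset.mem_erase.mpr ⟨hne, hiβ⟩) ?_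
          intro j hj
          have hbox := hx.1.1.1 j
          refine ⟨hbox.1, ?_⟩
          split_ifs with hji
          · rw [hji]; exact hile
          · exact hbox.2
      calc Φe β i₀ (O ∩ edgeSet β i₀)
          ≤ Φe β i₀ (T ∪ ⋃ i ∈ β.erase i₀, Dset β i₀ i ε) := measure_mono hcover
        _ ≤ Φe β i₀ T + Φe β i₀ (⋃ i ∈ β.erase i₀, Dset β i₀ i ε) := measure_union_le _ _
        _ ≤ Φe β i₀ T + ∑ i ∈ β.erase i₀, Φe β i₀ (Dset β i₀ i ε) :=
            add_le_add_right (measure_biUnion_finset_le _ _) _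
        _ ≤ Φe β i₀ T + ∑ i ∈ β.erase i₀, ENNReal.ofReal (Mb β * ε) := by
            refine add_le_add_right (Finset.sum_le_sum fun i hi => ?_) _
            calc Φe β i₀ (Dset β i₀ i ε)
                ≤ (ENNReal.ofReal (Mb β) • edgeLebesgue β i₀) (Dset β i₀ i ε) :=
                  Measure.le_iff'.mp (hdens β i₀ hi₀) _
              _ = ENNReal.ofReal (Mb β) * edgeLebesgue β i₀ (Dset β i₀ i ε) := rfl
              _ ≤ ENNReal.ofReal (Mb β) * ENNReal.ofReal ε :=
                  mul_le_mul_right (Dset_vol β i₀ hi ε) _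
              _ = ENNReal.ofReal (Mb β * ε) := (ENNReal.ofReal_mul (hMb β)).symm
        _ = Φe β i₀ T + ENNReal.ofReal (Mb β * ((β.card : ℝ) - 1) * ε) := by
            rw [Finset.sum_const, Finset.card_erase_of_mem hi₀, nsmul_eq_mul,
              ← ENNReal.ofReal_natCast, ← ENNReal.ofReal_mul (Nat.cast_nonneg _)]
            congr 1
            rw [Nat.cast_sub hcard1]
            push_cast
            ring
    · rw [if_neg hβ, ENNReal.ofReal_zero, add_zero]
      have hempty : O ∩ edgeSet β i₀ = ∅ := by
        ext x
        simp only [Set.mem_inter_iff, Set.mem_empty_iff_false, iff_false]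
        rintro ⟨hxO, hxE⟩
        by_cases hsub : α ⊆ β
        · obtain ⟨k, hkβ, hkα⟩ :=
            Finset.exists_of_ssubset (Finset.ssubset_iff_subset_ne.mpr ⟨hsub, Ne.symm hβ⟩)
          have h0 : x k = 0 := hxO.2.2 k hkα
          by_cases hk : k = i₀
          · have h1 : x i₀ = 1 := hxE.2.1
            rw [hk] at h0
            linarith
          · have := (hxE.2.2.1 k hkβ hk).1
            linarith
        · obtain ⟨i, hiα, hiβ⟩ := Finset.not_subset.mp hsub
          have h1 : x i = 0 := hxE.2.2.2 i hiβ
          have h2 : 0 < x i := hxO.2.1 i hiα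
          linarith
      rw [hempty, measure_empty]
      exact zero_le
  -- real arithmetic: summing the error terms
  have e1nn : ∀ (β : Finset (Fin d)) (i₀ : Fin d),
      0 ≤ (if α ⊆ β ∧ β ≠ α ∧ i₀ ∈ α then Mb β * ε' else 0) := by
    intro β i₀
    split_ifs
    · exact mul_nonneg (hMb β) hε'.le
    · exact le_refl 0
  have e2nn : ∀ (β : Finset (Fin d)) (i₀ : Fin d),
      0 ≤ (if β = α then Mb α * ((α.card : ℝ) - 1) * ε else 0) := by
    intro β i₀
    split_ifs
    · have h1 : (1 : ℝ) ≤ (α.card : ℝ) := by exact_mod_cast hcard1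
      exact mul_nonneg (mul_nonneg (hMb α) (by linarith)) hε.le
    · exact le_refl 0
  have hsum1 : (∑ β : Finset (Fin d), ∑ i₀ ∈ β,
      (if α ⊆ β ∧ β ≠ α ∧ i₀ ∈ α then Mb β * ε' else 0)) ≤ M * d * ε' := by
    have hstep : ∀ β : Finset (Fin d), (∑ i₀ ∈ β,
        (if α ⊆ β ∧ β ≠ α ∧ i₀ ∈ α then Mb β * ε' else 0)) ≤
        (d : ℝ) * (if 2 ≤ β.card then Mb β * ε' else 0) := by
      intro β
      have hg : 0 ≤ (if 2 ≤ β.card then Mb β * ε' else 0) := by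
        split_ifs
        · exact mul_nonneg (hMb β) hε'.le
        · exact le_refl 0
      have hterm : ∀ i₀ ∈ β, (if α ⊆ β ∧ β ≠ α ∧ i₀ ∈ α then Mb β * ε' else 0) ≤
          (if 2 ≤ β.card then Mb β * ε' else 0) := by
        intro i₀ _
        split_ifs with h1 h2
        · exact le_refl _
        · exfalso
          apply h2
          have hlt := Finset.card_lt_card
            (Finset.ssubset_iff_subset_ne.mpr ⟨h1.1, Ne.symm h1.2.1⟩)
          omega
        · exact mul_nonneg (hMb β) hε'.le
        · exact le_refl 0
      have hcd : (β.card : ℝ) ≤ (d : ℝ) := by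
        have h1 : β.card ≤ d := le_trans (Finset.card_le_univ β) (by simp)
        exact_mod_cast h1
      calc (∑ i₀ ∈ β, (if α ⊆ β ∧ β ≠ α ∧ i₀ ∈ α then Mb β * ε' else 0))
          ≤ β.card • (if 2 ≤ β.card then Mb β * ε' else 0) :=
            Finset.sum_le_card_nsmul _ _ _ hterm
        _ = (β.card : ℝ) * (if 2 ≤ β.card then Mb β * ε' else 0) := nsmul_eq_mul _ _
        _ ≤ (d : ℝ) * (if 2 ≤ β.card then Mb β * ε' else 0) :=
            mul_le_mul_of_nonneg_right hcd hg
    calc (∑ β : Finset (Fin d), ∑ i₀ ∈ β,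
        (if α ⊆ β ∧ β ≠ α ∧ i₀ ∈ α then Mb β * ε' else 0))
        ≤ ∑ β : Finset (Fin d), (d : ℝ) * (if 2 ≤ β.card then Mb β * ε' else 0) :=
          Finset.sum_le_sum fun β _ => hstep β
      _ = (d : ℝ) * ∑ β : Finset (Fin d), (if 2 ≤ β.card then Mb β * ε' else 0) :=
          (Finset.mul_sum _ _ _).symm
      _ = (d : ℝ) * ∑ β ∈ Finset.univ.filter (fun β : Finset (Fin d) => 2 ≤ β.card),
            Mb β * ε' := by rw [Finset.sum_filter]
      _ = (d : ℝ) * ((∑ β ∈ Finset.univ.filter (fun β : Finset (Fin d) => 2 ≤ β.card),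
            Mb β) * ε') := by rw [Finset.sum_mul]
      _ ≤ (d : ℝ) * (M * ε') :=
          mul_le_mul_of_nonneg_left (mul_le_mul_of_nonneg_right hM hε'.le) (Nat.cast_nonneg d)
      _ = M * d * ε' := by ring
  have hsum2 : (∑ β : Finset (Fin d), ∑ i₀ ∈ β,
      (if β = α then Mb α * ((α.card : ℝ) - 1) * ε else 0)) ≤ M * (α.card : ℝ) ^ 2 * ε := by
    have hstep : ∀ β : Finset (Fin d),
        (∑ i₀ ∈ β, (if β = α then Mb α * ((α.card : ℝ) - 1) * ε else 0)) =
        (if β = α then (α.card : ℝ) * (Mb α * ((α.card : ℝ) - 1) * ε) else 0) := by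
      intro β
      split_ifs with h
      · subst h; rw [Finset.sum_const, nsmul_eq_mul]
      · simp
    rw [Finset.sum_congr rfl fun β _ => hstep β,
      Finset.sum_ite_eq' Finset.univ α (fun _ => (α.card : ℝ) * (Mb α * ((α.card : ℝ) - 1) * ε)),
      if_pos (Finset.mem_univ α)]
    have ha : (1 : ℝ) ≤ (α.card : ℝ) := by exact_mod_cast hcard1
    nlinarith [mul_nonneg (mul_nonneg hε.le (sq_nonneg ((α.card : ℝ)))) (sub_nonneg.mpr hMα),
      mul_nonneg (mul_nonneg hε.le (by linarith : (0:ℝ) ≤ (α.card : ℝ))) (hMb α)]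
  -- assembling
  have happly : ∀ A : Set (Fin d → ℝ), Φ A = ∑ β : Finset (Fin d), ∑ i₀ ∈ β, Φe β i₀ A := by
    intro A
    rw [hdecomp, Measure.finset_sum_apply]
    exact Finset.sum_congr rfl fun β _ => Measure.finset_sum_apply _ _ _
  constructor
  · calc Φ T = ∑ β : Finset (Fin d), ∑ i₀ ∈ β, Φe β i₀ T := happly T
      _ ≤ ∑ β : Finset (Fin d), ∑ i₀ ∈ β, (Φe β i₀ O +
            ENNReal.ofReal (if α ⊆ β ∧ β ≠ α ∧ i₀ ∈ α then Mb β * ε' else 0)) :=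
          Finset.sum_le_sum fun β _ => Finset.sum_le_sum fun i₀ hi₀ => key1 β i₀ hi₀
      _ = (∑ β : Finset (Fin d), ∑ i₀ ∈ β, Φe β i₀ O) +
          ∑ β : Finset (Fin d), ∑ i₀ ∈ β,
            ENNReal.ofReal (if α ⊆ β ∧ β ≠ α ∧ i₀ ∈ α then Mb β * ε' else 0) := by
          simp_rw [Finset.sum_add_distrib]
      _ = Φ O + ∑ β : Finset (Fin d), ∑ i₀ ∈ β,
            ENNReal.ofReal (if α ⊆ β ∧ β ≠ α ∧ i₀ ∈ α then Mb β * ε' else 0) := by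
          rw [← happly O]
      _ ≤ Φ O + ENNReal.ofReal (M * (α.card : ℝ) ^ 2 * ε + M * d * ε') := by
          apply add_le_add_right
          calc (∑ β : Finset (Fin d), ∑ i₀ ∈ β,
              ENNReal.ofReal (if α ⊆ β ∧ β ≠ α ∧ i₀ ∈ α then Mb β * ε' else 0))
              = ∑ β : Finset (Fin d), ENNReal.ofReal (∑ i₀ ∈ β,
                (if α ⊆ β ∧ β ≠ α ∧ i₀ ∈ α then Mb β * ε' else 0)) :=
                Finset.sum_congr rfl fun β _ =>
                  (ENNReal.ofReal_sum_of_nonneg fun i₀ _ => e1nn β i₀).symm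
            _ = ENNReal.ofReal (∑ β : Finset (Fin d), ∑ i₀ ∈ β,
                (if α ⊆ β ∧ β ≠ α ∧ i₀ ∈ α then Mb β * ε' else 0)) :=
                (ENNReal.ofReal_sum_of_nonneg fun β _ =>
                  Finset.sum_nonneg fun i₀ _ => e1nn β i₀).symm
            _ ≤ ENNReal.ofReal (M * (α.card : ℝ) ^ 2 * ε + M * d * ε') := by
                apply ENNReal.ofReal_le_ofReal
                have hnn : 0 ≤ M * (α.card : ℝ) ^ 2 * ε :=
                  mul_nonneg (mul_nonneg hM0 (sq_nonneg _)) hε.le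
                linarith [hsum1]
  · calc Φ O = ∑ β : Finset (Fin d), ∑ i₀ ∈ β, Φe β i₀ O := happly O
      _ ≤ ∑ β : Finset (Fin d), ∑ i₀ ∈ β, (Φe β i₀ T +
            ENNReal.ofReal (if β = α then Mb α * ((α.card : ℝ) - 1) * ε else 0)) :=
          Finset.sum_le_sum fun β _ => Finset.sum_le_sum fun i₀ hi₀ => key2 β i₀ hi₀
      _ = (∑ β : Finset (Fin d), ∑ i₀ ∈ β, Φe β i₀ T) +
          ∑ β : Finset (Fin d), ∑ i₀ ∈ β,
            ENNReal.ofReal (if β = α then Mb α * ((α.card : ℝ) - 1) * ε else 0) := by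
          simp_rw [Finset.sum_add_distrib]
      _ = Φ T + ∑ β : Finset (Fin d), ∑ i₀ ∈ β,
            ENNReal.ofReal (if β = α then Mb α * ((α.card : ℝ) - 1) * ε else 0) := by
          rw [← happly T]
      _ ≤ Φ T + ENNReal.ofReal (M * (α.card : ℝ) ^ 2 * ε + M * d * ε') := by
          apply add_le_add_right
          calc (∑ β : Finset (Fin d), ∑ i₀ ∈ β,
              ENNReal.ofReal (if β = α then Mb α * ((α.card : ℝ) - 1) * ε else 0))
              = ∑ β : Finset (Fin d), ENNReal.ofReal (∑ i₀ ∈ β,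
                (if β = α then Mb α * ((α.card : ℝ) - 1) * ε else 0)) :=
                Finset.sum_congr rfl fun β _ =>
                  (ENNReal.ofReal_sum_of_nonneg fun i₀ _ => e2nn β i₀).symm
            _ = ENNReal.ofReal (∑ β : Finset (Fin d), ∑ i₀ ∈ β,
                (if β = α then Mb α * ((α.card : ℝ) - 1) * ε else 0)) :=
                (ENNReal.ofReal_sum_of_nonneg fun β _ =>
                  Finset.sum_nonneg fun i₀ _ => e2nn β i₀).symm
            _ ≤ ENNReal.ofReal (M * (α.card : ℝ) ^ 2 * ε + M * d * ε') := by
                apply ENNReal.ofReal_le_ofReal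
                have hnn : 0 ≤ M * (d : ℝ) * ε' :=
                  mul_nonneg (mul_nonneg hM0 (Nat.cast_nonneg d)) hε'.le
                linarith [hsum2]
end
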